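/- Let A = {a_0 < ... < a_{k-1}} ⊆ C_n with least element a_0. The union of the constant map ā_0 with all layers L^ℓ_{a_0}(σ^{(n)}(A)) for ℓ ≥ a_0+1 equals exactly the set of α ∈ σ^{(n)}(A) with α(a_0) = a_0. Equivalently, α ∈ σ^{(n)}(A) takes the value a_0 at least a_0+1 times if and only if a_0 is a fixed point of α. -/
import Mathlib


/-- For `a0` the least element of `A` and `α` a monotone map with range in `A`,
`α` takes the value `a0` at least `a0 + 1` times iff `a0` is a fixed point of `α`. -/
theorem stmt5 (n : ℕ) (A : Set (Fin n)) (a0 : Fin n) (ha0 : a0 ∈ A)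
    (hleast : ∀ x ∈ A, a0 ≤ x) (α : Fin n → Fin n) (hm : Monotone α)
    (hr : Set.range α ⊆ A) :
    (a0 : ℕ) + 1 ≤ (Finset.univ.filter fun i => α i = a0).card ↔ α a0 = a0 := by
  have hdc : ∀ j i : Fin n, j ≤ i → α i = a0 → α j = a0 := by
    intro j i hji hi
    exact le_antisymm (hi ▸ hm hji) (hleast _ (hr ⟨j, rfl⟩))
  constructor
  · intro hcard
    by_contra h
    have hsub : (Finset.univ.filter fun i => α i = a0) ⊆ Finset.Iio a0 := by
      intro i hi
      simp only [Finset.mem_filter] at hi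
      simp only [Finset.mem_Iio]
      by_contra hlt
      exact h (hdc a0 i (le_of_not_gt hlt) hi.2)
    have := Finset.card_le_card hsub
    rw [Fin.card_Iio] at this
    omega
  · intro hfix
    have hsub : Finset.Iic a0 ⊆ (Finset.univ.filter fun i => α i = a0) := by
      intro j hj
      simp only [Finset.mem_Iic] at hj
      simp only [Finset.mem_filter, Finset.mem_univ, true_and]
      exact hdc j a0 hj hfix
    have := Finset.card_le_card hsub
    rw [Fin.card_Iic] at this
    omega
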